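/- Let q₀ ∈ (0, π/2). If x, y ∈ ℝ²∖{0} satisfy ∠(x,y) ≤ q₀/2 and y ∈ C^F_{π/2−q₀}(x) ∪ C^B_{π/2−q₀}(x), then ‖y − x‖ ≤ csc(q₀/2)·‖x‖·∠(x,y). -/

import Mathlib

open MeasureTheory Set Metric Filter
open scoped Classical ENNReal Topology Pointwise RealInnerProductSpace

noncomputable section

/-! ## The plane and the lattice -/

abbrev Z2 := ℤ × ℤ
abbrev E2 := EuclideanSpace ℝ (Fin 2)

/-- the point of `ℝ²` with the given coordinates -/
def mk2 (a b : ℝ) : E2 := (WithLp.equiv 2 (Fin 2 → ℝ)).symm ![a, b]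

/-- the embedding of the lattice `ℤ²` into the Euclidean plane -/
def toE2 (v : Z2) : E2 := mk2 v.1 v.2

/-- coordinatewise integer part -/
def fl (x : E2) : Z2 := (⌊x 0⌋, ⌊x 1⌋)

/-- nearest-neighbour adjacency on `ℤ²` -/
def Adj (a b : Z2) : Prop := (a.1 - b.1).natAbs + (a.2 - b.2).natAbs = 1

instance (a b : Z2) : Decidable (Adj a b) := by unfold Adj; infer_instance

/-- strict lexicographic order on `ℤ²` (used to orient edges) -/
def lexLt (a b : Z2) : Prop := a.1 < b.1 ∨ (a.1 = b.1 ∧ a.2 < b.2)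

instance (a b : Z2) : Decidable (lexLt a b) := by unfold lexLt; infer_instance

/-- weak lexicographic order on `ℤ²` -/
def lexLe (a b : Z2) : Prop := a.1 < b.1 ∨ (a.1 = b.1 ∧ a.2 ≤ b.2)

/-- a nearest-neighbour edge of `ℤ²`, recorded with lexicographically ordered endpoints -/
def IsEdge (e : Z2 × Z2) : Prop := Adj e.1 e.2 ∧ lexLt e.1 e.2

instance (e : Z2 × Z2) : Decidable (IsEdge e) := by unfold IsEdge; infer_instance

abbrev Edge := {e : Z2 × Z2 // IsEdge e}

/-- a configuration: an assignment of open/closed to every edge of `ℤ²` -/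
abbrev Config := Edge → Bool

/-- the edge between the adjacent sites `a` and `b` is open -/
def EOpen (ω : Config) (a b : Z2) : Prop :=
  (∃ h : IsEdge (a, b), ω ⟨(a, b), h⟩ = true) ∨ ∃ h : IsEdge (b, a), ω ⟨(b, a), h⟩ = true

/-- `x ↔ y` : `x` and `y` are joined by a path of open edges -/
def Conn (ω : Config) (x y : Z2) : Prop := Relation.ReflTransGen (EOpen ω) x y

/-- the edge between `a` and `b` is open and contained (as a subset of `ℝ²`) in `A` -/
def EOpenIn (ω : Config) (A : Set E2) (a b : Z2) : Prop :=
  EOpen ω a b ∧ segment ℝ (toE2 a) (toE2 b) ⊆ A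

/-- `x ↔^A y` : `x` and `y` are joined by a path of open edges contained in `A` -/
def ConnIn (ω : Config) (A : Set E2) (x y : Z2) : Prop :=
  Relation.ReflTransGen (EOpenIn ω A) x y

/-! ## Circuits -/

/-- a cycle in `ℤ²` that visits no vertex twice -/
structure Circuit where
  len : ℕ
  four_le : 4 ≤ len
  f : ZMod len → Z2
  inj : Function.Injective f
  adj : ∀ i, Adj (f i) (f (i + 1))

/-- the closed subset of `ℝ²` formed by the unit edges of the cycle -/
def Circuit.carrier (Γ : Circuit) : Set E2 :=
  ⋃ i, segment ℝ (toE2 (Γ.f i)) (toE2 (Γ.f (i + 1)))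

/-- all edges of the circuit are open -/
def Circuit.IsOpenCir (Γ : Circuit) (ω : Config) : Prop := ∀ i, EOpen ω (Γ.f i) (Γ.f (i + 1))

/-- `INT S`: the union of the bounded connected components of `ℝ² ∖ S`
(for a circuit, the bounded connected component of the complement) -/
def INT (S : Set E2) : Set E2 :=
  {x | x ∉ S ∧ Bornology.IsBounded (connectedComponentIn Sᶜ x)}

/-- planar Lebesgue measure, as a real number -/
def vol (S : Set E2) : ℝ := (volume S).toReal

def IsCircuit (S : Set E2) : Prop := ∃ Γ : Circuit, Γ.carrier = S

/-- `S` is the carrier of an open circuit -/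
def IsOpenCircuit (ω : Config) (S : Set E2) : Prop := ∃ Γ : Circuit, Γ.carrier = S ∧ Γ.IsOpenCir ω

/-- an outermost open circuit -/
def IsOutermost (ω : Config) (S : Set E2) : Prop :=
  IsOpenCircuit ω S ∧ ∀ S', IsOpenCircuit ω S' → INT S ⊆ INT S' → S' = S

/-- `Γ₀`: the unique outermost open circuit that surrounds the origin when exactly one
such circuit exists, and `∅` otherwise -/
def Gamma0 (ω : Config) : Set E2 :=
  if h : ∃! S : Set E2, IsOutermost ω S ∧ (0 : E2) ∈ INT S then h.exists.choose else ∅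

/-- `V(Γ) = Γ ∩ ℤ²` -/
def VSet (S : Set E2) : Set E2 := S ∩ Set.range toE2

/-- the boundary of the convex hull of `V(Γ)` -/
def hullB (S : Set E2) : Set E2 := frontier (convexHull ℝ (VSet S))

/-- maximum local roughness -/
def MLR (S : Set E2) : ℝ := sSup ((fun x => infDist x (hullB S)) '' VSet S)

/-- maximum facet length -/
def MFL (S : Set E2) : ℝ :=
  sSup {r : ℝ | ∃ x y : E2, r = dist x y ∧ segment ℝ x y ⊆ hullB S}

/-- conditional probability `P(A ∣ B)` -/
def cP (P : Measure Config) (A B : Set Config) : ℝ := (P (A ∩ B)).toReal / (P B).toReal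

/-! ## The random cluster measure -/

/-- the edges with both endpoints in `Λ` -/
def edgesIn (Λ : Finset Z2) : Finset (Z2 × Z2) := (Λ ×ˢ Λ).filter IsEdge

/-- a configuration on the edges within `Λ` -/
abbrev LConfig (Λ : Finset Z2) := {e // e ∈ edgesIn Λ} → Bool

def locOpen (Λ : Finset Z2) (η : LConfig Λ) (a b : Z2) : Prop :=
  (∃ h : (a, b) ∈ edgesIn Λ, η ⟨(a, b), h⟩ = true) ∨ ∃ h : (b, a) ∈ edgesIn Λ, η ⟨(b, a), h⟩ = true

/-- `k(η)`: the number of connected components of the graph on `Λ` whose edge set is the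
set of `η`-open edges within `Λ` -/
def kComp (Λ : Finset Z2) (η : LConfig Λ) : ℕ :=
  Set.ncard {C : Set Z2 | ∃ a ∈ Λ, C = {b | b ∈ Λ ∧ Relation.ReflTransGen (locOpen Λ η) a b}}

/-- the random-cluster weight `p^{#open} (1-p)^{#closed} q^{k(η)}` -/
def rcWeight (p q : ℝ) (Λ : Finset Z2) (η : LConfig Λ) : ℝ :=
  p ^ (Finset.univ.filter fun e => η e = true).card *
    (1 - p) ^ (Finset.univ.filter fun e => η e = false).card * q ^ kComp Λ η

/-- the free random cluster probability on `Λ` of a set of local configurations -/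
def rcProb (p q : ℝ) (Λ : Finset Z2) (S : Set (LConfig Λ)) : ℝ :=
  (∑ η : LConfig Λ, if η ∈ S then rcWeight p q Λ η else 0) / ∑ η : LConfig Λ, rcWeight p q Λ η

/-- the box `Λ_N = {-N, …, N}²` -/
def box (N : ℕ) : Finset Z2 := Finset.Icc (-(N : ℤ)) (N : ℤ) ×ˢ Finset.Icc (-(N : ℤ)) (N : ℤ)

/-- the hypotheses on the subcritical random-cluster measure `P` with parameters `p, q`:
(i) finite-volume free random-cluster measures on the boxes `Λ_N` converge to `P` on
cylinder events; (ii) exponential decay of connectivity. -/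
def IsSubcriticalRC (p q : ℝ) (P : Measure Config) : Prop :=
  (∀ (F : Finset Edge) (ζ : Edge → Bool),
      Tendsto
        (fun N : ℕ => rcProb p q (box N)
          {η | ∀ e ∈ F, ∀ h : (e : Z2 × Z2) ∈ edgesIn (box N), η ⟨(e : Z2 × Z2), h⟩ = ζ e})
        atTop (𝓝 ((P {ω | ∀ e ∈ F, ω e = ζ e}).toReal))) ∧
  ∃ c C : ℝ, 0 < c ∧ 0 < C ∧ ∀ N : ℕ,
    (P {ω | ∃ x : Z2, x ∉ box N ∧ Conn ω 0 x}).toReal ≤ C * Real.exp (-c * N)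

/-! ## The Wulff shape, global distortion, centring and the event `AREA` -/

/-- the Wulff shape `λ • ⋂_{u ∈ S¹} {t : ⟨t,u⟩ ≤ ξ(u)}` -/
def wulff (ξ : E2 → ℝ) (lam : ℝ) : Set E2 :=
  lam • ⋂ u ∈ sphere (0 : E2) 1, {t : E2 | (inner ℝ t u : ℝ) ≤ ξ u}

/-- the Hausdorff distance of `S` from the translate by `z` of `n ∂𝒲` -/
def gdVal (ξ : E2 → ℝ) (lam : ℝ) (n : ℕ) (z : Z2) (S : Set E2) : ℝ :=
  hausdorffDist ((fun y => y + toE2 z) '' ((n : ℝ) • frontier (wulff ξ lam))) S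

/-- global distortion -/
def GD (ξ : E2 → ℝ) (lam : ℝ) (n : ℕ) (S : Set E2) : ℝ := ⨅ z : Z2, gdVal ξ lam n z S

/-- `z` is the lexicographically minimal minimiser in the definition of `GD` -/
def IsCen (ξ : E2 → ℝ) (lam : ℝ) (n : ℕ) (S : Set E2) (z : Z2) : Prop :=
  gdVal ξ lam n z S = GD ξ lam n S ∧ ∀ z', gdVal ξ lam n z' S = GD ξ lam n S → lexLe z z'

/-- the centre of a circuit -/
def cen (ξ : E2 → ℝ) (lam : ℝ) (n : ℕ) (S : Set E2) : Z2 :=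
  if h : ∃ z, IsCen ξ lam n S z then h.choose else 0

/-- the event `AREA_{0,A} = {|INT(Γ₀)| ≥ A} ∩ {cen(Γ₀) = 0}` (centring at scale `n`) -/
def AREA (ξ : E2 → ℝ) (lam : ℝ) (n : ℕ) (A : ℝ) : Set Config :=
  {ω | A ≤ vol (INT (Gamma0 ω)) ∧ cen ξ lam n (Gamma0 ω) = 0}

/-- the hypotheses on the inverse correlation length `ξ` and the Wulff normalisation `lam` -/
def WulffHyp (P : Measure Config) (ξ : E2 → ℝ) (lam : ℝ) : Prop :=
  (∀ x : E2,
      Tendsto (fun k : ℕ => -((k : ℝ)⁻¹) * Real.log ((P {ω | Conn ω 0 (fl ((k : ℝ) • x))}).toReal))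
        atTop (𝓝 (ξ x))) ∧
    0 < lam ∧ volume (wulff ξ lam) = 1

/-! ## Angles, cones and sectors -/

/-- the angle between two vectors of `ℝ²` -/
def ang (u w : E2) : ℝ := InnerProductGeometry.angle u w

/-- rotation by `π/2` counterclockwise -/
def perp (v : E2) : E2 := mk2 (-(v 1)) (v 0)

/-- the forward cone `C^F_{π/2 - q₀}(v)` -/
def coneF (q₀ : ℝ) (v : E2) : Set E2 := insert v {w | ang (w - v) (perp v) ≤ Real.pi / 2 - q₀}

/-- the backward cone `C^B_{π/2 - q₀}(v)` -/
def coneB (q₀ : ℝ) (v : E2) : Set E2 := insert v {w | ang (w - v) (-perp v) ≤ Real.pi / 2 - q₀}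

/-- the cone `W_{v,c}` with apex `0` about the direction of `v`, of half-aperture `c` -/
def coneDir (v : E2) (c : ℝ) : Set E2 := insert 0 {z | z ≠ 0 ∧ ang z v ≤ c}

/-- the argument of a point of the plane -/
def argOf (z : E2) : ℝ := Complex.arg ⟨z 0, z 1⟩

/-- reduction modulo `2π` to `[0, 2π)` -/
def mod2pi (t : ℝ) : ℝ := t - 2 * Real.pi * ⌊t / (2 * Real.pi)⌋

/-- the unit vector of argument `θ` -/
def dirE (θ : ℝ) : E2 := mk2 (Real.cos θ) (Real.sin θ)

/-- the closed angular sector `A_{x,y}` with apex `0` swept counterclockwise from the ray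
through `x` to the ray through `y` -/
def sector (x y : E2) : Set E2 :=
  insert 0 {z | ∃ r s : ℝ, 0 < r ∧ 0 ≤ s ∧ s ≤ mod2pi (argOf y - argOf x) ∧
    z = r • dirE (argOf x + s)}

/-! ## Open clusters, open paths, good area capture -/

/-- the open cluster of `x`, as the union of the closed open edges of its component -/
def cluster (ω : Config) (x : Z2) : Set E2 :=
  ⋃ (a : Z2) (b : Z2) (_ : Conn ω x a ∧ EOpen ω a b), segment ℝ (toE2 a) (toE2 b)

/-- the open cluster of `x` within the region `A` -/
def clusterIn (ω : Config) (A : Set E2) (x : Z2) : Set E2 :=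
  ⋃ (a : Z2) (b : Z2) (_ : ConnIn ω A x a ∧ EOpenIn ω A a b), segment ℝ (toE2 a) (toE2 b)

/-- the common open cluster `γ'_{x,y}` of `x` and `y` -/
def cluster2 (ω : Config) (x y : Z2) : Set E2 := cluster ω x ∩ cluster ω y

/-- `fluc_{x,y}(S)`: the maximal distance of a point of `S` from the segment `[x,y]` -/
def fluc (x y : Z2) (S : Set E2) : ℝ :=
  sSup ((fun z => infDist z (segment ℝ (toE2 x) (toE2 y))) '' S)

/-- `S` is (the carrier of) an open path from `x` to `y` contained in `A` -/
def IsOpenPathIn (ω : Config) (A : Set E2) (x y : Z2) (S : Set E2) : Prop :=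
  ∃ l : List Z2, l.Nodup ∧ l.head? = some x ∧ l.getLast? = some y ∧
    List.Chain' (EOpenIn ω A) l ∧
    S = ⋃ p ∈ l.zip l.tail, segment ℝ (toE2 p.1) (toE2 p.2)

/-- the union of the bounded connected components of `A ∖ S` -/
def boundedCompIn (A S : Set E2) : Set E2 :=
  {z | z ∈ A \ S ∧ Bornology.IsBounded (connectedComponentIn (A \ S) z)}

/-- the event `GAC(x,y,ε)` of `ε`-good area capture in the sector `A_{x,y}` -/
def GAC (q₀ : ℝ) (ω : Config) (x y : Z2) (ε : ℝ) : Prop :=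
  ConnIn ω (sector (toE2 x) (toE2 y)) x y ∧
  clusterIn ω (sector (toE2 x) (toE2 y)) x ⊆
    coneF (q₀ / 2) (toE2 x) ∩ coneB (q₀ / 2) (toE2 y) ∧
  ∃ S : Set E2,
    (IsOpenPathIn ω (sector (toE2 x) (toE2 y)) x y S ∧
      ∀ S', IsOpenPathIn ω (sector (toE2 x) (toE2 y)) x y S' →
        boundedCompIn (sector (toE2 x) (toE2 y)) S ⊆
          boundedCompIn (sector (toE2 x) (toE2 y)) S' → S' = S) ∧
    diam S ≤ 2 * dist (toE2 x) (toE2 y) ∧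
    vol (convexHull ℝ {0, toE2 x, toE2 y}) +
        ε * dist (toE2 x) (toE2 y) ^ (3 / 2 : ℝ) *
          Real.log (dist (toE2 x) (toE2 y)) ^ (1 / 2 : ℝ) ≤
      vol (boundedCompIn (sector (toE2 x) (toE2 y)) S)

/-- the edge `e`, as a closed unit segment of `ℝ²` -/
def edgeSeg (e : Edge) : Set E2 := segment ℝ (toE2 (e : Z2 × Z2).1) (toE2 (e : Z2 × Z2).2)

/-! ## Mixing properties -/

/-- the σ-algebra `σ_A` generated by the edge variables in `A` -/
def sigmaOn (A : Set Edge) : MeasurableSpace Config :=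
  MeasurableSpace.comap (fun (ω : Config) (e : A) => ω (e : Edge)) inferInstance

/-- `V(A)`: the endpoints of the edges of `A` -/
def VE (A : Set Edge) : Set Z2 := {v | ∃ e ∈ A, (e : Z2 × Z2).1 = v ∨ (e : Z2 × Z2).2 = v}

/-- the ratio-weak-mixing property with constants `Cr, lam` -/
def RWM (Cr lam : ℝ) (P : Measure Config) : Prop :=
  ∀ 𝒟 ℱ : Set Edge,
    Cr * ∑' (x : VE 𝒟) (y : VE ℱ), Real.exp (-lam * dist (toE2 (x : Z2)) (toE2 (y : Z2))) < 1 →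
    ∀ D F : Set Config, MeasurableSet[sigmaOn 𝒟] D → MeasurableSet[sigmaOn ℱ] F →
      0 < (P D).toReal * (P F).toReal →
      |(P (D ∩ F)).toReal / ((P D).toReal * (P F).toReal) - 1| ≤
        Cr * ∑' (x : VE 𝒟) (y : VE ℱ), Real.exp (-lam * dist (toE2 (x : Z2)) (toE2 (y : Z2)))

/-- the bounded energy property with constant `cbe` -/
def BddEnergy (cbe : ℝ) (P : Measure Config) : Prop :=
  ∀ (e : Edge) (F : Set Config), MeasurableSet[sigmaOn {e}ᶜ] F →
    cbe * (P F).toReal ≤ (P (F ∩ {ω | ω e = true})).toReal ∧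
      (P (F ∩ {ω | ω e = true})).toReal ≤ (1 - cbe) * (P F).toReal

/-- `κ_m(A,B)` -/
def kappa (lam m : ℝ) (A B : Set Edge) : ℝ :=
  ∑' (x : VE A) (y : VE B),
    if m ≤ dist (toE2 (x : Z2)) (toE2 (y : Z2)) then
      Real.exp (-lam * dist (toE2 (x : Z2)) (toE2 (y : Z2))) else 0

/-- `φ_m(A,B)`: the number of pairs of edges of `A × B` within distance `m` of each other -/
def phiCount (m : ℝ) (A B : Set Edge) : ℕ∞ :=
  {ab : Edge × Edge | ab.1 ∈ A ∧ ab.2 ∈ B ∧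
    ∃ u ∈ edgeSeg ab.1, ∃ v ∈ edgeSeg ab.2, dist u v ≤ m}.encard

/-- `A` and `B` are `(m₀, C₂)`-well separated -/
def WellSep (Cr lam : ℝ) (m₀ C₂ : ℕ) (A B : Set Edge) : Prop :=
  A ∩ B = ∅ ∧ kappa lam m₀ A B ≤ 1 / (2 * Cr) ∧ phiCount (m₀ : ℝ) A B ≤ (C₂ : ℕ∞)

/-! ## Regeneration sites -/

/-- the set of `Γ`-regeneration sites -/
def RG (q₀ c₀ : ℝ) (Γ : Set E2) : Set Z2 :=
  {v | toE2 v ∈ Γ ∧ Γ ∩ coneDir (toE2 v) c₀ ⊆ coneF q₀ (toE2 v) ∪ coneB q₀ (toE2 v)}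

/-- `θ_RG^MAX(Γ)`: the maximal angle of a sector rooted at the origin free of regeneration
sites -/
def thetaRGMax (q₀ c₀ : ℝ) (Γ : Set E2) : ℝ :=
  sSup {r : ℝ | r ∈ Set.Icc 0 (2 * Real.pi) ∧
    ∃ a : E2, ‖a‖ = 1 ∧ coneDir a (r / 2) ∩ (toE2 '' RG q₀ c₀ Γ) = ∅}

/-- the counterclockwise angular displacement from `x` to `u` -/
def ccwDisp (x u : E2) : ℝ := mod2pi (argOf u - argOf x)

/-- `u` is a regeneration site first encountered in a counterclockwise (or clockwise) angular
search about the origin beginning at `x` -/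
def IsFirstRG (q₀ c₀ : ℝ) (Γ : Set E2) (x u : Z2) : Prop :=
  u ∈ RG q₀ c₀ Γ ∧
    ((∀ w ∈ RG q₀ c₀ Γ, ccwDisp (toE2 x) (toE2 u) ≤ ccwDisp (toE2 x) (toE2 w)) ∨
      ∀ w ∈ RG q₀ c₀ Γ, ccwDisp (toE2 u) (toE2 x) ≤ ccwDisp (toE2 w) (toE2 x))

/-- the maximum point-to-regeneration-site distance -/
def MPRG (q₀ c₀ : ℝ) (Γ : Set E2) : ℝ :=
  sSup {d : ℝ | ∃ x : Z2, toE2 x ∈ Γ ∧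
    ∃ u : Z2, IsFirstRG q₀ c₀ Γ x u ∧ d = dist (toE2 x) (toE2 u)}

/-! ## Translation of configurations -/

/-- the translate of the edge `e` by `v` -/
def shiftE (v : Z2) (e : Edge) : Edge :=
  ⟨((e.1.1.1 + v.1, e.1.1.2 + v.2), (e.1.2.1 + v.1, e.1.2.2 + v.2)), by
    obtain ⟨h1, h2⟩ := e.2
    unfold IsEdge Adj lexLt at *
    exact ⟨by simp only at h1 ⊢; omega, by simp only at h2 ⊢; omega⟩⟩

/-- the shifted configuration `ω_v(e) = ω(e + v)` -/
def shiftC (v : Z2) (ω : Config) : Config := fun e => ω (shiftE v e)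


private lemma arccos_le_arccos' {u v : ℝ} (h : u ≤ v) : Real.arccos v ≤ Real.arccos u := by
  rw [Real.arccos_eq_pi_div_two_sub_arcsin, Real.arccos_eq_pi_div_two_sub_arcsin]
  linarith [Real.monotone_arcsin h]

private lemma sin_bound' {c t : ℝ} (hc : 0 ≤ c) (hc2 : c ≤ Real.pi / 2)
    (h1 : c ≤ t) (h2 : t ≤ Real.pi - c) : Real.sin c ≤ Real.sin t := by
  have hpi := Real.pi_pos
  rcases le_or_gt t (Real.pi / 2) with h | h
  · exact Real.strictMonoOn_sin.monotoneOn ⟨by linarith, hc2⟩ ⟨by linarith, h⟩ h1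
  · rw [← Real.sin_pi_sub t]
    exact Real.strictMonoOn_sin.monotoneOn ⟨by linarith, hc2⟩ ⟨by linarith, by linarith⟩
      (by linarith)

open InnerProductGeometry in
private lemma angle_triangle_aux {V : Type*} [NormedAddCommGroup V] [InnerProductSpace ℝ V]
    (x y z : V) (hx : x ≠ 0) (hy : y ≠ 0) (hz : z ≠ 0) :
    angle x z ≤ angle x y + angle y z := by
  rcases le_or_gt Real.pi (angle x y + angle y z) with hsum | hsum
  · exact (angle_le_pi x z).trans hsum
  have hxn : (0:ℝ) < ‖x‖ := norm_pos_iff.2 hx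
  have hyn : (0:ℝ) < ‖y‖ := norm_pos_iff.2 hy
  have hzn : (0:ℝ) < ‖z‖ := norm_pos_iff.2 hz
  set d : ℝ := ⟪x, y⟫ with hd
  set e : ℝ := ⟪y, z⟫ with he
  set n : ℝ := ‖y‖ with hn
  set x' : V := x - (d / n ^ 2) • y with hx'
  set z' : V := z - (e / n ^ 2) • y with hz'
  have hyy : ⟪y, y⟫ = n ^ 2 := real_inner_self_eq_norm_sq y
  have hxy : ⟪y, x⟫ = d := real_inner_comm x y
  have hzy : ⟪z, y⟫ = e := real_inner_comm y z
  have hinner : ⟪x', z'⟫ = ⟪x, z⟫ - d * e / n ^ 2 := by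
    simp only [hx', hz', inner_sub_left, inner_sub_right, real_inner_smul_left,
      real_inner_smul_right, hyy, hxy, hzy]
    try field_simp
    try ring
  have ha : Real.sin (angle x y) * ‖x‖ = ‖x'‖ := by
    have h1 := sin_angle_mul_norm_mul_norm x y
    have hx'2 : ‖x'‖ ^ 2 = ⟪x', x'⟫ := (real_inner_self_eq_norm_sq x').symm
    have h2 : ⟪x, x⟫ * ⟪y, y⟫ - ⟪x, y⟫ * ⟪x, y⟫ = (‖x'‖ * n) ^ 2 := by
      have : ⟪x', x'⟫ = ⟪x, x⟫ - d * d / n ^ 2 := by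
        simp only [hx', inner_sub_left, inner_sub_right, real_inner_smul_left,
          real_inner_smul_right, hyy, hxy, ← hd]
        try field_simp
        try ring
      rw [mul_pow, hx'2, this, hyy, ← hd]
      try field_simp
      try ring
    rw [h2, Real.sqrt_sq (by positivity)] at h1
    have hn0 : n ≠ 0 := hyn.ne'
    have h1' : Real.sin (angle x y) * ‖x‖ * n = ‖x'‖ * n := by rw [← h1]; ring
    exact mul_right_cancel₀ hn0 h1'
  have hb : Real.sin (angle y z) * ‖z‖ = ‖z'‖ := by
    have h1 := sin_angle_mul_norm_mul_norm y z
    have hz'2 : ‖z'‖ ^ 2 = ⟪z', z'⟫ := (real_inner_self_eq_norm_sq z').symm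
    have h2 : ⟪y, y⟫ * ⟪z, z⟫ - ⟪y, z⟫ * ⟪y, z⟫ = (‖z'‖ * n) ^ 2 := by
      have : ⟪z', z'⟫ = ⟪z, z⟫ - e * e / n ^ 2 := by
        simp only [hz', inner_sub_left, inner_sub_right, real_inner_smul_left,
          real_inner_smul_right, hyy, hzy, ← he]
        try field_simp
        try ring
      rw [mul_pow, hz'2, this, hyy, ← he]
      try field_simp
      try ring
    rw [h2, Real.sqrt_sq (by positivity)] at h1
    have hn0 : n ≠ 0 := hyn.ne'
    have h1' : Real.sin (angle y z) * ‖z‖ * n = ‖z'‖ * n := by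
      rw [← h1]; ring
    exact mul_right_cancel₀ hn0 h1'
  have hcosa : Real.cos (angle x y) * ‖x‖ = d / n := by
    have h := cos_angle_mul_norm_mul_norm x y
    rw [eq_div_iff hyn.ne']
    rw [← hd, ← hn] at h
    linarith [h, mul_assoc (Real.cos (angle x y)) ‖x‖ n]
  have hcosc : Real.cos (angle y z) * ‖z‖ = e / n := by
    have h := cos_angle_mul_norm_mul_norm y z
    rw [eq_div_iff hyn.ne']
    rw [← he, ← hn] at h
    nlinarith [h]
  have hCS := (abs_le.1 (abs_real_inner_le_norm x' z')).1
  have key : Real.cos (angle x y + angle y z) * (‖x‖ * ‖z‖) ≤ ⟪x, z⟫ := by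
    rw [Real.cos_add]
    have e1 : (Real.cos (angle x y) * Real.cos (angle y z) -
        Real.sin (angle x y) * Real.sin (angle y z)) * (‖x‖ * ‖z‖)
        = (Real.cos (angle x y) * ‖x‖) * (Real.cos (angle y z) * ‖z‖) -
          (Real.sin (angle x y) * ‖x‖) * (Real.sin (angle y z) * ‖z‖) := by ring
    rw [e1, hcosa, hcosc, ha, hb]
    have e2 : d / n * (e / n) = d * e / n ^ 2 := by
      rw [div_mul_div_comm, sq]
    rw [e2]
    linarith [hCS, hinner.symm.le, hinner.le]
  have h0 : 0 ≤ angle x y + angle y z := add_nonneg (angle_nonneg _ _) (angle_nonneg _ _)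
  have hδ : Real.cos (angle x y + angle y z) ≤ ⟪x, z⟫ / (‖x‖ * ‖z‖) := by
    rw [le_div_iff₀ (by positivity)]; exact key
  calc angle x z = Real.arccos (⟪x, z⟫ / (‖x‖ * ‖z‖)) := rfl
    _ ≤ Real.arccos (Real.cos (angle x y + angle y z)) := arccos_le_arccos' hδ
    _ = angle x y + angle y z := Real.arccos_cos h0 hsum.le


private lemma perp_props (x : E2) (hx : x ≠ 0) : perp x ≠ 0 ∧ ⟪x, perp x⟫ = 0 := by
  have h0 : perp x 0 = -(x 1) := by simp [perp, mk2]
  have h1 : perp x 1 = x 0 := by simp [perp, mk2]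
  constructor
  · intro h
    apply hx
    have e0 : x 0 = 0 := by rw [← h1, h]; rfl
    have e1 : x 1 = 0 := by have : perp x 0 = 0 := by rw [h]; rfl
                            rw [h0] at this; linarith
    ext i
    fin_cases i
    · exact e0
    · exact e1
  · rw [PiLp.inner_apply, Fin.sum_univ_two, h0, h1]
    simp [RCLike.inner_apply]
    ring


/-- **Control near a regeneration direction.** If `∠(x,y) ≤ q₀/2` and `y` lies in the
forward or backward cone of `x`, then `‖y - x‖ ≤ csc(q₀/2) ‖x‖ ∠(x,y)`. -/
theorem dist_le_of_angle (q₀ : ℝ) (hq : q₀ ∈ Set.Ioo 0 (Real.pi / 2)) (x y : E2)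
    (hx : x ≠ 0) (hy : y ≠ 0) (hang : ang x y ≤ q₀ / 2)
    (hmem : y ∈ coneF q₀ x ∪ coneB q₀ x) :
    ‖y - x‖ ≤ (Real.sin (q₀ / 2))⁻¹ * ‖x‖ * ang x y := by
  have hpi := Real.pi_pos
  obtain ⟨hq0, hq2⟩ := hq
  have hs : 0 < Real.sin (q₀ / 2) := Real.sin_pos_of_pos_of_lt_pi (by linarith) (by linarith)
  have hangnn := InnerProductGeometry.angle_nonneg x y
  have hang' : InnerProductGeometry.angle x y ≤ q₀ / 2 := hang
  by_cases hw : y - x = 0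
  · rw [hw, norm_zero]
    exact mul_nonneg (mul_nonneg (inv_nonneg.2 hs.le) (norm_nonneg x)) hangnn
  obtain ⟨hp0, hip⟩ := perp_props x hx
  obtain ⟨p, hpne, hipz, hcone⟩ : ∃ p : E2, p ≠ 0 ∧ ⟪x, p⟫ = 0 ∧
      InnerProductGeometry.angle (y - x) p ≤ Real.pi / 2 - q₀ := by
    rcases hmem with h | h
    · rcases Set.mem_insert_iff.1 h with h | h
      · exact absurd (by rw [h, sub_self]) hw
      · exact ⟨perp x, hp0, hip, h⟩
    · rcases Set.mem_insert_iff.1 h with h | h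
      · exact absurd (by rw [h, sub_self]) hw
      · exact ⟨-(perp x), neg_ne_zero.2 hp0, by rw [inner_neg_right, hip, neg_zero], h⟩
  set w : E2 := y - x with hwdef
  have hxpang : InnerProductGeometry.angle x p = Real.pi / 2 :=
    (InnerProductGeometry.inner_eq_zero_iff_angle_eq_pi_div_two x p).1 hipz
  have hxnpang : InnerProductGeometry.angle (-x) p = Real.pi / 2 := by
    refine (InnerProductGeometry.inner_eq_zero_iff_angle_eq_pi_div_two (-x) p).1 ?_
    rw [inner_neg_left, hipz, neg_zero]
  have h1 : q₀ ≤ InnerProductGeometry.angle w x := by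
    have t := angle_triangle_aux x w p hx hw hpne
    rw [hxpang, InnerProductGeometry.angle_comm x w] at t
    linarith
  have h2 : InnerProductGeometry.angle w x ≤ Real.pi - q₀ := by
    have t := angle_triangle_aux (-x) w p (neg_ne_zero.2 hx) hw hpne
    rw [hxnpang, InnerProductGeometry.angle_comm (-x) w,
      InnerProductGeometry.angle_neg_right w x] at t
    linarith
  have h3 : q₀ / 2 ≤ InnerProductGeometry.angle w y := by
    have t := angle_triangle_aux w y x hw hy hx
    rw [InnerProductGeometry.angle_comm y x] at t
    linarith
  have h4 : InnerProductGeometry.angle w y ≤ Real.pi - q₀ / 2 := by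
    have t := angle_triangle_aux w x y hw hx hy
    linarith
  have h5 : Real.sin (q₀ / 2) ≤ Real.sin (InnerProductGeometry.angle w y) :=
    sin_bound' (by linarith) (by linarith) h3 h4
  have h6 : Real.sin (InnerProductGeometry.angle w y) * (‖w‖ * ‖y‖) =
      Real.sin (InnerProductGeometry.angle x y) * (‖x‖ * ‖y‖) := by
    rw [InnerProductGeometry.sin_angle_mul_norm_mul_norm,
      InnerProductGeometry.sin_angle_mul_norm_mul_norm]
    congr 1
    simp only [hwdef, inner_sub_left, inner_sub_right]
    rw [real_inner_comm y x]
    ring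
  have hyn : (0:ℝ) < ‖y‖ := norm_pos_iff.2 hy
  have step : Real.sin (q₀ / 2) * (‖w‖ * ‖y‖) ≤
      InnerProductGeometry.angle x y * (‖x‖ * ‖y‖) := by
    calc Real.sin (q₀ / 2) * (‖w‖ * ‖y‖)
        ≤ Real.sin (InnerProductGeometry.angle w y) * (‖w‖ * ‖y‖) :=
          mul_le_mul_of_nonneg_right h5 (by positivity)
      _ = Real.sin (InnerProductGeometry.angle x y) * (‖x‖ * ‖y‖) := h6
      _ ≤ InnerProductGeometry.angle x y * (‖x‖ * ‖y‖) :=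
          mul_le_mul_of_nonneg_right (Real.sin_le hangnn) (by positivity)
  have step' : Real.sin (q₀ / 2) * ‖w‖ ≤ InnerProductGeometry.angle x y * ‖x‖ := by
    refine le_of_mul_le_mul_right ?_ hyn
    rw [mul_assoc, mul_assoc]
    exact step
  have final : ‖w‖ ≤ (Real.sin (q₀ / 2))⁻¹ * ‖x‖ * InnerProductGeometry.angle x y := by
    rw [mul_assoc, ← div_eq_inv_mul, le_div_iff₀ hs]
    nlinarith [step']
  exact final
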